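/- Let A ∈ ℝⁿˣⁿ, and suppose Φ(T) = N(T)Σ(T)L(T)ᵀ is the SVD of the transition matrix of v̇ = Av (constant coefficients), Φ(T) = e^{AT}, with singular values e^{μᵢ(T)T} where μᵢ(T) = (1/T)ln σᵢ(T). Then as T → 0⁺, the FTLEs μᵢ(T) converge to the eigenvalues of the symmetric part (A + Aᵀ)/2 of A. (It suffices to prove: lim_{T→0⁺} (1/T)ln σᵢ(e^{AT}) = λᵢ((A+Aᵀ)/2), where σᵢ denotes the i-th singular value and λᵢ the i-th eigenvalue, both in increasing order.) -/

import Mathlib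

open Matrix

section Aux
open NormedSpace


lemma entry_hasDerivAt (n : ℕ) (A : Matrix (Fin n) (Fin n) ℝ) (r c : Fin n) :
    HasDerivAt (fun T : ℝ => exp (T • A) r c) (A r c) 0 := by
  letI : SeminormedRing (Matrix (Fin n) (Fin n) ℝ) := Matrix.linftyOpSemiNormedRing
  letI : NormedRing (Matrix (Fin n) (Fin n) ℝ) := Matrix.linftyOpNormedRing
  letI : NormedAlgebra ℝ (Matrix (Fin n) (Fin n) ℝ) := Matrix.linftyOpNormedAlgebra
  letI : AddCommGroup (Matrix (Fin n) (Fin n) ℝ) := NormedAddCommGroup.toAddCommGroup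
  letI : Module ℝ (Matrix (Fin n) (Fin n) ℝ) := NormedSpace.toModule
  letI : TopologicalSpace (Matrix (Fin n) (Fin n) ℝ) :=
    PseudoMetricSpace.toUniformSpace.toTopologicalSpace
  have h : HasDerivAt (fun u : ℝ => exp (u • A)) A 0 := by
    simpa using hasDerivAt_exp_smul_const' (𝕂 := ℝ) A 0
  rw [hasDerivAt_iff_isLittleO] at h ⊢
  have hb : (fun T : ℝ => (exp (T • A) r c - exp ((0:ℝ) • A) r c - (T - 0) • A r c))
      =O[nhds 0] (fun T : ℝ => exp (T • A) - exp ((0:ℝ) • A) - (T - 0) • A) := by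
    apply Asymptotics.isBigO_of_le
    intro T
    have : (exp (T • A) - exp ((0:ℝ) • A) - (T - 0) • A) r c
        = exp (T • A) r c - exp ((0:ℝ) • A) r c - (T - 0) • A r c := by
      simp [Matrix.sub_apply, Matrix.smul_apply]
    rw [← this]
    -- entry norm ≤ linfty op norm
    set M := exp (T • A) - exp ((0:ℝ) • A) - (T - 0) • A
    have h1 : ‖M r c‖₊ ≤ ‖M‖₊ := by
      rw [Matrix.linfty_opNNNorm_def]
      refine le_trans ?_ (Finset.le_sup (Finset.mem_univ r))
      exact Finset.single_le_sum (f := fun j => ‖M r j‖₊) (fun j _ => zero_le) (Finset.mem_univ c)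
    exact_mod_cast h1
  exact hb.trans_isLittleO h

lemma orth_dot (n : ℕ) (W : Matrix (Fin n) (Fin n) ℝ) (hW : Wᵀ * W = 1)
    (a b : Fin n → ℝ) : (W *ᵥ a) ⬝ᵥ (W *ᵥ b) = a ⬝ᵥ b := by
  rw [Matrix.dotProduct_mulVec, ← Matrix.mulVec_transpose, Matrix.mulVec_mulVec, hW,
    Matrix.one_mulVec]

lemma quad_diag (n : ℕ) (W : Matrix (Fin n) (Fin n) ℝ) (hW : Wᵀ * W = 1)
    (p : Fin n → ℝ) (c : Fin n → ℝ) :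
    (W *ᵥ c) ⬝ᵥ ((W * Matrix.diagonal p * Wᵀ) *ᵥ (W *ᵥ c)) = ∑ k, p k * c k ^ 2 := by
  rw [Matrix.mulVec_mulVec, Matrix.mul_assoc, Matrix.mul_assoc, hW, Matrix.mul_one,
    ← Matrix.mulVec_mulVec, orth_dot n W hW]
  simp [dotProduct, Matrix.mulVec_diagonal]
  ring_nf
  exact Finset.sum_congr rfl (fun k _ => by ring)

lemma exists_common (n : ℕ) (L U : Matrix (Fin n) (Fin n) ℝ)
    (hL2 : L * Lᵀ = 1) (hU2 : U * Uᵀ = 1) (i : Fin n) :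
    ∃ (y c b : Fin n → ℝ), y ≠ 0 ∧ (∀ k, i < k → c k = 0) ∧ (∀ k, k < i → b k = 0) ∧
      y = L *ᵥ c ∧ y = U *ᵥ b := by
  classical
  let Ψ : (Fin n → ℝ) →ₗ[ℝ] (Fin n → ℝ) :=
    { toFun := fun y k => if i < k then (Lᵀ *ᵥ y) k else if k < i then (Uᵀ *ᵥ y) k else 0
      map_add' := by
        intro y z; funext k
        simp only [Matrix.mulVec_add, Pi.add_apply]
        split_ifs <;> simp
      map_smul' := by
        intro t y; funext k
        simp only [Matrix.mulVec_smul, Pi.smul_apply, RingHom.id_apply, smul_eq_mul]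
        split_ifs <;> simp }
  have hnotsurj : ¬ Function.Surjective Ψ := by
    intro hs
    obtain ⟨y, hy⟩ := hs (Pi.single i 1)
    have := congrFun hy i
    simp [Ψ, Pi.single_eq_same] at this
  have hnotinj : ¬ Function.Injective Ψ := by
    rwa [LinearMap.injective_iff_surjective]
  obtain ⟨y₁, y₂, h12, hne⟩ := Function.not_injective_iff.mp hnotinj
  refine ⟨y₁ - y₂, Lᵀ *ᵥ (y₁ - y₂), Uᵀ *ᵥ (y₁ - y₂), sub_ne_zero.mpr hne, ?_, ?_, ?_, ?_⟩
  · intro k hk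
    have h0 : Ψ (y₁ - y₂) = 0 := by rw [map_sub, h12, sub_self]
    have := congrFun h0 k
    simpa [Ψ, if_pos hk] using this
  · intro k hk
    have h0 : Ψ (y₁ - y₂) = 0 := by rw [map_sub, h12, sub_self]
    have := congrFun h0 k
    simpa [Ψ, if_neg (asymm hk), if_pos hk] using this
  · rw [Matrix.mulVec_mulVec, hL2, Matrix.one_mulVec]
  · rw [Matrix.mulVec_mulVec, hU2, Matrix.one_mulVec]

lemma quad_bound (n : ℕ) (M : Matrix (Fin n) (Fin n) ℝ) (x : Fin n → ℝ) :
    |x ⬝ᵥ (M *ᵥ x)| ≤ (∑ r, ∑ c, |M r c|) * (x ⬝ᵥ x) := by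
  have hsq : ∀ r : Fin n, x r ^ 2 ≤ x ⬝ᵥ x := by
    intro r
    simp only [dotProduct, ← sq]
    exact Finset.single_le_sum (f := fun j => x j ^ 2) (fun j _ => sq_nonneg _)
      (Finset.mem_univ r)
  have key : ∀ r c : Fin n, |x r| * |x c| ≤ x ⬝ᵥ x := by
    intro r c
    nlinarith [hsq r, hsq c, sq_nonneg (|x r| - |x c|), sq_abs (x r), sq_abs (x c),
      abs_nonneg (x r), abs_nonneg (x c)]
  calc |x ⬝ᵥ (M *ᵥ x)| = |∑ r, ∑ c, x r * (M r c * x c)| := by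
        simp [dotProduct, Matrix.mulVec, Finset.mul_sum]
    _ ≤ ∑ r, ∑ c, |x r * (M r c * x c)| := by
        refine (Finset.abs_sum_le_sum_abs _ _).trans ?_
        exact Finset.sum_le_sum fun r _ => Finset.abs_sum_le_sum_abs _ _
    _ ≤ ∑ r, ∑ c, |M r c| * (x ⬝ᵥ x) := by
        refine Finset.sum_le_sum fun r _ => Finset.sum_le_sum fun c _ => ?_
        rw [abs_mul, abs_mul]
        calc |x r| * (|M r c| * |x c|) = |M r c| * (|x r| * |x c|) := by ring
          _ ≤ |M r c| * (x ⬝ᵥ x) := by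
              exact mul_le_mul_of_nonneg_left (key r c) (abs_nonneg _)
    _ = (∑ r, ∑ c, |M r c|) * (x ⬝ᵥ x) := by simp [Finset.sum_mul]

lemma weyl_one (n : ℕ) (P Q : Matrix (Fin n) (Fin n) ℝ) (p q : Fin n → ℝ)
    (hp : Monotone p) (hq : Monotone q)
    (L : Matrix (Fin n) (Fin n) ℝ) (hL1 : Lᵀ * L = 1) (hL2 : L * Lᵀ = 1)
    (hP : P = L * Matrix.diagonal p * Lᵀ)
    (U : Matrix (Fin n) (Fin n) ℝ) (hU1 : Uᵀ * U = 1) (hU2 : U * Uᵀ = 1)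
    (hQ : Q = U * Matrix.diagonal q * Uᵀ)
    (i : Fin n) (ε : ℝ)
    (hPQ : ∀ x : Fin n → ℝ, |x ⬝ᵥ ((Q - P) *ᵥ x)| ≤ ε * (x ⬝ᵥ x)) :
    q i ≤ p i + ε := by
  obtain ⟨y, c, b, hy, hc, hb, hyc, hyb⟩ := exists_common n L U hL2 hU2 i
  have hyy : y ⬝ᵥ y = ∑ k, c k ^ 2 := by
    rw [hyc, orth_dot n L hL1]
    simp [dotProduct, sq]
  have hyy' : y ⬝ᵥ y = ∑ k, b k ^ 2 := by
    rw [hyb, orth_dot n U hU1]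
    simp [dotProduct, sq]
  have hypos : 0 < y ⬝ᵥ y := by
    have h0 : y ⬝ᵥ y ≠ 0 := fun h => hy (dotProduct_self_eq_zero.mp h)
    have hnn : 0 ≤ y ⬝ᵥ y := by
      simp only [dotProduct]
      exact Finset.sum_nonneg fun k _ => mul_self_nonneg _
    exact lt_of_le_of_ne hnn (Ne.symm h0)
  have hPy : y ⬝ᵥ (P *ᵥ y) ≤ p i * (y ⬝ᵥ y) := by
    have e1 : y ⬝ᵥ (P *ᵥ y) = ∑ k, p k * c k ^ 2 := by
      rw [hP, hyc, quad_diag n L hL1]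
    rw [e1, hyy, Finset.mul_sum]
    refine Finset.sum_le_sum fun k _ => ?_
    rcases le_or_gt k i with hk | hk
    · exact mul_le_mul_of_nonneg_right (hp hk) (sq_nonneg _)
    · rw [hc k hk]; simp
  have hQy : q i * (y ⬝ᵥ y) ≤ y ⬝ᵥ (Q *ᵥ y) := by
    have e1 : y ⬝ᵥ (Q *ᵥ y) = ∑ k, q k * b k ^ 2 := by
      rw [hQ, hyb, quad_diag n U hU1]
    rw [e1, hyy', Finset.mul_sum]
    refine Finset.sum_le_sum fun k _ => ?_
    rcases le_or_gt i k with hk | hk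
    · exact mul_le_mul_of_nonneg_right (hq hk) (sq_nonneg _)
    · rw [hb k hk]; simp
  have hdiff : y ⬝ᵥ (Q *ᵥ y) - y ⬝ᵥ (P *ᵥ y) ≤ ε * (y ⬝ᵥ y) := by
    have h1 : y ⬝ᵥ ((Q - P) *ᵥ y) = y ⬝ᵥ (Q *ᵥ y) - y ⬝ᵥ (P *ᵥ y) := by
      rw [Matrix.sub_mulVec, dotProduct_sub]
    have := hPQ y
    rw [h1] at this
    exact (le_abs_self _).trans this
  have : q i * (y ⬝ᵥ y) ≤ (p i + ε) * (y ⬝ᵥ y) := by nlinarith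
  exact le_of_mul_le_mul_right (by linarith [this]) hypos

section Main

variable (n : ℕ) (A : Matrix (Fin n) (Fin n) ℝ)

-- abbreviation for E T
noncomputable def Emat (T : ℝ) : Matrix (Fin n) (Fin n) ℝ :=
  (exp (T • A))ᵀ * exp (T • A)

lemma Emat_entry_hasDerivAt (r c : Fin n) :
    HasDerivAt (fun T : ℝ => Emat n A T r c) (A c r + A r c) 0 := by
  have h : ∀ T : ℝ, Emat n A T r c = ∑ k, exp (T • A) k r * exp (T • A) k c := by
    intro T
    simp [Emat, Matrix.mul_apply, Matrix.transpose_apply]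
  have hsum : HasDerivAt (fun T : ℝ => ∑ k, exp (T • A) k r * exp (T • A) k c)
      (∑ k, (A k r * (1 : Matrix (Fin n) (Fin n) ℝ) k c
        + (1 : Matrix (Fin n) (Fin n) ℝ) k r * A k c)) 0 := by
    apply HasDerivAt.fun_sum
    intro k _
    have h1 := entry_hasDerivAt n A k r
    have h2 := entry_hasDerivAt n A k c
    have := h1.fun_mul h2
    simpa [zero_smul, exp_zero] using this
  have hval : (∑ k, (A k r * (1 : Matrix (Fin n) (Fin n) ℝ) k c
      + (1 : Matrix (Fin n) (Fin n) ℝ) k r * A k c)) = A c r + A r c := by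
    simp [Matrix.one_apply, Finset.sum_add_distrib, Finset.sum_ite_eq, Finset.sum_ite_eq']
  rw [hval] at hsum
  exact hsum.congr_of_eventuallyEq (by filter_upwards with T using (h T))

noncomputable def Smat : Matrix (Fin n) (Fin n) ℝ := (1 / 2 : ℝ) • (A + Aᵀ)

noncomputable def Dfun (T : ℝ) : ℝ :=
  ∑ r, ∑ c, |Smat n A r c - (2 * T)⁻¹ * (Emat n A T r c - (1 : Matrix (Fin n) (Fin n) ℝ) r c)|

lemma Emat_zero : Emat n A 0 = 1 := by
  simp [Emat, zero_smul, exp_zero]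

lemma Dfun_tendsto : Filter.Tendsto (Dfun n A) (nhdsWithin 0 (Set.Ioi 0)) (nhds 0) := by
  have hentry : ∀ r c : Fin n,
      Filter.Tendsto (fun T : ℝ => Smat n A r c
          - (2 * T)⁻¹ * (Emat n A T r c - (1 : Matrix (Fin n) (Fin n) ℝ) r c))
        (nhdsWithin 0 {(0:ℝ)}ᶜ) (nhds 0) := by
    intro r c
    have hd := Emat_entry_hasDerivAt n A r c
    have hs := hasDerivAt_iff_tendsto_slope.mp hd
    have h1 : Filter.Tendsto (fun T : ℝ => Smat n A r c - (1/2 : ℝ) * slope (fun T => Emat n A T r c) 0 T)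
        (nhdsWithin 0 {(0:ℝ)}ᶜ) (nhds (Smat n A r c - (1/2 : ℝ) * (A c r + A r c))) :=
      Filter.Tendsto.const_sub _ (Filter.Tendsto.const_mul _ hs)
    have hval : Smat n A r c - (1/2 : ℝ) * (A c r + A r c) = 0 := by
      simp [Smat, Matrix.smul_apply, Matrix.add_apply, Matrix.transpose_apply]
      ring
    rw [hval] at h1
    refine h1.congr' ?_
    filter_upwards [self_mem_nhdsWithin] with T hT
    have hT0 : T ≠ 0 := hT
    rw [slope_def_field, Emat_zero]
    field_simp
    try ring
  have hsum := tendsto_finset_sum (Finset.univ : Finset (Fin n)) (fun r _ =>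
    tendsto_finset_sum (Finset.univ : Finset (Fin n)) (fun c _ => ((hentry r c).abs)))
  have h0 : (∑ _r : Fin n, ∑ _c : Fin n, |(0:ℝ)|) = 0 := by simp
  rw [h0] at hsum
  exact hsum.mono_left (nhdsWithin_mono _ (fun x hx => ne_of_gt hx))

lemma key_bound (T : ℝ) (hT : 0 < T) (σT : Fin n → ℝ) (hmono : Monotone σT)
    (hpos : ∀ i, 0 < σT i) (N L : Matrix (Fin n) (Fin n) ℝ)
    (hN1 : Nᵀ * N = 1) (hL1 : Lᵀ * L = 1) (hL2 : L * Lᵀ = 1)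
    (hexp : exp (T • A) = N * Matrix.diagonal σT * Lᵀ)
    (lam : Fin n → ℝ) (hlam : Monotone lam) (U : Matrix (Fin n) (Fin n) ℝ)
    (hU1 : Uᵀ * U = 1) (hU2 : U * Uᵀ = 1)
    (hS : Smat n A = U * Matrix.diagonal lam * Uᵀ) (i : Fin n) :
    |(σT i ^ 2 - 1) / (2 * T) - lam i| ≤ Dfun n A T := by
  set p : Fin n → ℝ := fun k => (σT k ^ 2 - 1) / (2 * T) with hp_def
  have hT2 : (0:ℝ) < 2 * T := by linarith
  have hpmono : Monotone p := by
    intro k l hkl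
    have h1 : σT k ≤ σT l := hmono hkl
    have h2 : σT k ^ 2 ≤ σT l ^ 2 := by nlinarith [hpos k, hpos l]
    exact (div_le_div_iff_of_pos_right hT2).mpr (by linarith)
  have hE : Emat n A T = L * Matrix.diagonal (fun k => σT k ^ 2) * Lᵀ := by
    rw [Emat, hexp]
    rw [Matrix.transpose_mul, Matrix.transpose_mul, Matrix.transpose_transpose,
      Matrix.diagonal_transpose]
    simp only [Matrix.mul_assoc]
    rw [← Matrix.mul_assoc Nᵀ N, hN1, Matrix.one_mul,
      ← Matrix.mul_assoc (Matrix.diagonal σT), Matrix.diagonal_mul_diagonal]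
    congr 2
    ext k
    ring
  have hdp : Matrix.diagonal p
      = (2 * T)⁻¹ • (Matrix.diagonal (fun k => σT k ^ 2) - 1) := by
    ext r c
    rcases eq_or_ne r c with h | h
    · subst h
      simp [Matrix.diagonal_apply_eq, Matrix.one_apply_eq, hp_def, div_eq_inv_mul,
        Matrix.smul_apply, Matrix.sub_apply]
    · simp [Matrix.diagonal_apply_ne _ h, Matrix.one_apply_ne h, Matrix.smul_apply,
        Matrix.sub_apply]
  have hPE : L * Matrix.diagonal p * Lᵀ = (2 * T)⁻¹ • (Emat n A T - 1) := by
    rw [hdp, Matrix.mul_smul, Matrix.smul_mul, Matrix.mul_sub, Matrix.mul_one,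
      Matrix.sub_mul, hL2, ← hE]
  have hsum_eq : (∑ r, ∑ c, |(Smat n A - L * Matrix.diagonal p * Lᵀ) r c|) = Dfun n A T := by
    rw [Dfun]
    refine Finset.sum_congr rfl fun r _ => Finset.sum_congr rfl fun c _ => ?_
    rw [hPE]
    simp [Matrix.sub_apply, Matrix.smul_apply, smul_eq_mul, mul_sub]
  have hsum_eq' : (∑ r, ∑ c, |(L * Matrix.diagonal p * Lᵀ - Smat n A) r c|) = Dfun n A T := by
    rw [← hsum_eq]
    refine Finset.sum_congr rfl fun r _ => Finset.sum_congr rfl fun c _ => ?_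
    rw [← abs_neg]
    congr 1
    simp [Matrix.sub_apply]
  have h1 : lam i ≤ p i + Dfun n A T := by
    refine weyl_one n (L * Matrix.diagonal p * Lᵀ) (Smat n A) p lam hpmono hlam
      L hL1 hL2 rfl U hU1 hU2 hS i (Dfun n A T) ?_
    intro x
    calc |x ⬝ᵥ ((Smat n A - L * Matrix.diagonal p * Lᵀ) *ᵥ x)|
        ≤ (∑ r, ∑ c, |(Smat n A - L * Matrix.diagonal p * Lᵀ) r c|) * (x ⬝ᵥ x) :=
          quad_bound n _ x
      _ = Dfun n A T * (x ⬝ᵥ x) := by rw [hsum_eq]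
  have h2 : p i ≤ lam i + Dfun n A T := by
    refine weyl_one n (Smat n A) (L * Matrix.diagonal p * Lᵀ) lam p hlam hpmono
      U hU1 hU2 hS L hL1 hL2 rfl i (Dfun n A T) ?_
    intro x
    calc |x ⬝ᵥ ((L * Matrix.diagonal p * Lᵀ - Smat n A) *ᵥ x)|
        ≤ (∑ r, ∑ c, |(L * Matrix.diagonal p * Lᵀ - Smat n A) r c|) * (x ⬝ᵥ x) :=
          quad_bound n _ x
      _ = Dfun n A T * (x ⬝ᵥ x) := by rw [hsum_eq']
  rw [abs_sub_le_iff]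
  constructor <;> linarith

end Main

noncomputable def gfun (u : ℝ) : ℝ := if u = 0 then 1 else Real.log (1 + u) / u

lemma gfun_tendsto : Filter.Tendsto gfun (nhds 0) (nhds 1) := by
  have hd : HasDerivAt (fun u : ℝ => Real.log (1 + u)) 1 0 := by
    have h := ((hasDerivAt_id (0:ℝ)).const_add 1).log (by norm_num)
    simpa using h
  have hs := hasDerivAt_iff_tendsto_slope.mp hd
  have h1 : Filter.Tendsto gfun (nhdsWithin 0 {(0:ℝ)}ᶜ) (nhds 1) := by
    refine hs.congr' ?_
    filter_upwards [self_mem_nhdsWithin] with u hu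
    rw [slope_def_field]
    have hu0 : u ≠ 0 := hu
    simp [gfun, if_neg hu0]
  have h2 : Filter.Tendsto gfun (pure (0:ℝ)) (nhds 1) := by
    have := tendsto_pure_nhds gfun 0
    simpa [gfun] using this
  rw [← nhdsNE_sup_pure (0:ℝ)]
  exact Filter.tendsto_sup.mpr ⟨h1, h2⟩


end Aux

/-- As `T → 0⁺`, the finite-time Lyapunov exponents `(1/T) ln σᵢ(e^{AT})` (singular
values in increasing order) converge to the eigenvalues (in increasing order) of
the symmetric part `(A + Aᵀ)/2` of `A`. -/
theorem ftle_short_time_limit (n : ℕ) (A : Matrix (Fin n) (Fin n) ℝ)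
    (σ : ℝ → Fin n → ℝ) (lam : Fin n → ℝ)
    (hσ : ∀ T : ℝ, 0 < T → Monotone (σ T) ∧ (∀ i, 0 < σ T i) ∧
      ∃ N L : Matrix (Fin n) (Fin n) ℝ, Nᵀ * N = 1 ∧ N * Nᵀ = 1 ∧
        Lᵀ * L = 1 ∧ L * Lᵀ = 1 ∧
        NormedSpace.exp (T • A) = N * Matrix.diagonal (σ T) * Lᵀ)
    (hlam : Monotone lam)
    (hU : ∃ U : Matrix (Fin n) (Fin n) ℝ, Uᵀ * U = 1 ∧ U * Uᵀ = 1 ∧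
      (1 / 2 : ℝ) • (A + Aᵀ) = U * Matrix.diagonal lam * Uᵀ)
    (i : Fin n) :
    Filter.Tendsto (fun T : ℝ => (1 / T) * Real.log (σ T i))
      (nhdsWithin 0 (Set.Ioi 0)) (nhds (lam i)) := by
  obtain ⟨U, hU1, hU2, hSU⟩ := hU
  have hS : Smat n A = U * Matrix.diagonal lam * Uᵀ := hSU
  set F : ℝ → ℝ := fun T => (σ T i ^ 2 - 1) / (2 * T) with hF_def
  have hkey : ∀ T ∈ Set.Ioi (0:ℝ), |F T - lam i| ≤ Dfun n A T := by
    intro T hT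
    obtain ⟨hmono, hpos, N, L, hN1, _hN2, hL1, hL2, hexp⟩ := hσ T hT
    exact key_bound n A T hT (σ T) hmono hpos N L hN1 hL1 hL2 hexp lam hlam U hU1 hU2 hS i
  have hF : Filter.Tendsto F (nhdsWithin 0 (Set.Ioi 0)) (nhds (lam i)) := by
    rw [tendsto_iff_dist_tendsto_zero]
    refine squeeze_zero' ?_ ?_ (Dfun_tendsto n A)
    · filter_upwards with T using dist_nonneg
    · filter_upwards [self_mem_nhdsWithin] with T hT
      rw [Real.dist_eq]
      exact hkey T hT
  have hu : Filter.Tendsto (fun T => 2 * T * F T) (nhdsWithin 0 (Set.Ioi 0)) (nhds 0) := by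
    have h2T : Filter.Tendsto (fun T : ℝ => 2 * T) (nhdsWithin 0 (Set.Ioi 0)) (nhds 0) := by
      have : Filter.Tendsto (fun T : ℝ => 2 * T) (nhds 0) (nhds (2 * 0)) :=
        (continuous_const.mul continuous_id).tendsto 0
      simpa using this.mono_left nhdsWithin_le_nhds
    simpa using h2T.mul hF
  have hcomp : Filter.Tendsto (fun T => gfun (2 * T * F T) * F T)
      (nhdsWithin 0 (Set.Ioi 0)) (nhds (lam i)) := by
    have := (gfun_tendsto.comp hu).mul hF
    simpa using this
  refine Filter.Tendsto.congr' ?_ hcomp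
  filter_upwards [self_mem_nhdsWithin] with T hT
  have hT : (0:ℝ) < T := hT
  have hTne : T ≠ 0 := ne_of_gt hT
  have σpos : 0 < σ T i := (hσ T hT).2.1 i
  have hu_eq : 2 * T * F T = σ T i ^ 2 - 1 := by
    rw [hF_def]
    field_simp
  by_cases h0 : σ T i ^ 2 - 1 = 0
  · have hs1 : σ T i = 1 := by nlinarith
    have hF0 : F T = 0 := by rw [hF_def]; simp [h0]
    simp [hu_eq, h0, gfun, hF0, hs1]
  · have hlog : Real.log (σ T i ^ 2) = 2 * Real.log (σ T i) := by
      rw [Real.log_pow]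
      push_cast
      ring
    rw [hu_eq]
    simp only [gfun, h0, if_neg h0]
    have h1u : 1 + (σ T i ^ 2 - 1) = σ T i ^ 2 := by ring
    rw [h1u, hlog, hF_def]
    rw [if_neg not_false]
    field_simp
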